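/- Let G be a pronilpotent profinite group and let g ∈ G have a finite right Engel sink. Then the singleton {1} is a right Engel sink of g, that is, g is a right Engel element of G. -/

import Mathlib

open scoped commutatorElement in
/-- Iterated left-normed commutator: `commIter g x n = [g, x, x, ..., x]` with `n` copies of `x`. -/
def commIter {G : Type*} [Group G] (g x : G) : ℕ → G
  | 0 => g
  | n + 1 => ⁅commIter g x n, x⁆

/-- `R` is a right Engel sink of `g`. -/
def IsRightEngelSink {G : Type*} [Group G] (g : G) (R : Set G) : Prop :=
  ∀ x : G, ∃ n₀ : ℕ, 0 < n₀ ∧ ∀ n, n₀ ≤ n → commIter g x n ∈ R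

/-- `E` is a left Engel sink of `g`. -/
def IsLeftEngelSink {G : Type*} [Group G] (g : G) (E : Set G) : Prop :=
  ∀ x : G, ∃ n₀ : ℕ, 0 < n₀ ∧ ∀ n, n₀ ≤ n → commIter x g n ∈ E

/-- A group is locally nilpotent if every finitely generated subgroup is nilpotent. -/
def IsLocallyNilpotent (G : Type*) [Group G] : Prop :=
  ∀ S : Finset G, Group.IsNilpotent ↥(Subgroup.closure (S : Set G))

/-- A topological group is pronilpotent if every quotient by an open normal subgroup
is nilpotent. -/
def IsPronilpotent (G : Type*) [Group G] [TopologicalSpace G] : Prop :=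
  ∀ (N : Subgroup G) (hN : N.Normal), IsOpen (N : Set G) →
    (haveI := hN; Group.IsNilpotent (G ⧸ N))

/-- All quotients of `G` by open normal subgroups have order coprime to `k`;
this is the coprimality condition for an automorphism of order `k` of `G`. -/
def QuotientsCoprimeTo (G : Type*) [Group G] [TopologicalSpace G] (k : ℕ) : Prop :=
  ∀ N : Subgroup G, N.Normal → IsOpen (N : Set G) → Nat.Coprime N.index k

/-- `F` is the largest closed normal pronilpotent subgroup of `G`
(the pronilpotent radical `F(G)`). -/
def IsPronilpotentRadical (G : Type*) [Group G] [TopologicalSpace G] (F : Subgroup G) : Prop :=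
  IsClosed (F : Set G) ∧ F.Normal ∧ IsPronilpotent ↥F ∧
    ∀ K : Subgroup G, IsClosed (K : Set G) → K.Normal → IsPronilpotent ↥K → K ≤ F

/-- `F2` is the second term of the pronilpotent series: the preimage in `G` of the
pronilpotent radical of `G ⧸ F`. -/
def IsSecondRadical (G : Type*) [Group G] [TopologicalSpace G] (F : Subgroup G) [F.Normal]
    (F2 : Subgroup G) : Prop :=
  ∃ Fq : Subgroup (G ⧸ F), IsPronilpotentRadical (G ⧸ F) Fq ∧
    F2 = Fq.comap (QuotientGroup.mk' F)

/-- The Frattini subgroup of a topological group: the intersection of all maximal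
open subgroups. -/
def frattiniOpen (G : Type*) [Group G] [TopologicalSpace G] : Subgroup G :=
  ⨅ (M : Subgroup G) (_ : IsOpen (M : Set G) ∧ IsCoatom M), M

/-- `γ_∞(G)`: the intersection of the closures of the lower central series. -/
def gammaInf (G : Type*) [Group G] [TopologicalSpace G] [IsTopologicalGroup G] : Subgroup G :=
  ⨅ n : ℕ, ((⊤ : Subgroup G).lowerCentralSeries n).topologicalClosure

/-- `g` is a `p`-element: the closed subgroup it topologically generates is pro-`p`. -/
def IsPElement {G : Type*} [Group G] [TopologicalSpace G] [IsTopologicalGroup G]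
    (p : ℕ) (g : G) : Prop :=
  ∀ M : Subgroup ↥((Subgroup.closure {g}).topologicalClosure),
    M.Normal → IsOpen (M : Set ↥((Subgroup.closure {g}).topologicalClosure)) →
      ∃ k : ℕ, M.index = p ^ k

/-- `K` is the Hall `p'`-subgroup of the pronilpotent group `F`: the largest closed
subgroup normal in `F` all of whose finite quotients have order coprime to `p`. -/
def IsHallPComplement (G : Type*) [Group G] [TopologicalSpace G] (p : ℕ)
    (F K : Subgroup G) : Prop :=
  K ≤ F ∧ IsClosed (K : Set G) ∧ (K.subgroupOf F).Normal ∧ QuotientsCoprimeTo ↥K p ∧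
    ∀ K' : Subgroup G, K' ≤ F → IsClosed (K' : Set G) → (K'.subgroupOf F).Normal →
      QuotientsCoprimeTo ↥K' p → K' ≤ K

lemma commIter_map {G H : Type*} [Group G] [Group H] (f : G →* H) (g x : G) :
    ∀ n, f (commIter g x n) = commIter (f g) (f x) n
  | 0 => rfl
  | n + 1 => by
    rw [commIter, commIter, map_commutatorElement, commIter_map f g x n]

lemma commIter_mem_lcs {G : Type*} [Group G] (g x : G) :
    ∀ n, commIter g x n ∈ (⊤ : Subgroup G).lowerCentralSeries n
  | 0 => Subgroup.mem_top g
  | n + 1 => by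
    rw [commIter, Subgroup.lowerCentralSeries_succ]
    exact Subgroup.commutator_mem_commutator (commIter_mem_lcs g x n) (Subgroup.mem_top x)

lemma commIter_add {G : Type*} [Group G] (g x : G) (n : ℕ) :
    ∀ m, commIter g x (n + m) = commIter (commIter g x n) x m
  | 0 => rfl
  | m + 1 => by rw [← Nat.add_assoc, commIter, commIter, commIter_add g x n m]

lemma commIter_one {G : Type*} [Group G] (x : G) : ∀ n, commIter (1 : G) x n = 1
  | 0 => rfl
  | n + 1 => by rw [commIter, commIter_one x n, commutatorElement_def]; group

lemma commIter_periodic_eq_one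
    (G : Type) [Group G] [TopologicalSpace G] [IsTopologicalGroup G]
    [CompactSpace G] [T2Space G] [TotallyDisconnectedSpace G]
    (hpn : IsPronilpotent G) (g x : G) (i j : ℕ) (hij : i < j)
    (hijeq : commIter g x i = commIter g x j) : commIter g x i = 1 := by
  have hper : ∀ t : ℕ, commIter g x i = commIter g x (i + t * (j - i)) := by
    intro t
    induction t with
    | zero => simp
    | succ t iht =>
      have hrw : i + (t + 1) * (j - i) = j + t * (j - i) := by
        rw [Nat.succ_mul]; omega
      rw [hrw]
      calc commIter g x i = commIter g x (i + t * (j - i)) := iht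
        _ = commIter (commIter g x i) x (t * (j - i)) := commIter_add g x i _
        _ = commIter (commIter g x j) x (t * (j - i)) := by rw [hijeq]
        _ = commIter g x (j + t * (j - i)) := (commIter_add g x j _).symm
  have hmemN : ∀ N : Subgroup G, N.Normal → IsOpen (N : Set G) → commIter g x i ∈ N := by
    intro N hN hNopen
    haveI := hN
    obtain ⟨c, hc⟩ := Subgroup.nilpotent_iff_lowerCentralSeries.mp (hpn N hN hNopen)
    have hmemc : commIter g x (i + c * (j - i)) ∈ N := by
      rw [← QuotientGroup.eq_one_iff]
      have h1 : (QuotientGroup.mk' N) (commIter g x (i + c * (j - i))) ∈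
          (⊤ : Subgroup (G ⧸ N)).lowerCentralSeries (i + c * (j - i)) := by
        rw [commIter_map]
        exact commIter_mem_lcs _ _ _
      have h2 : (⊤ : Subgroup (G ⧸ N)).lowerCentralSeries (i + c * (j - i)) ≤ ⊥ := by
        rw [← hc]
        have hpos : 1 ≤ j - i := by omega
        exact Subgroup.lowerCentralSeries_antitone _ (le_add_left (by nlinarith))
      simpa using h2 h1
    rw [hper c]; exact hmemc
  by_contra hne
  have hopen : IsOpen ({commIter g x i}ᶜ : Set G) := isClosed_singleton.isOpen_compl
  have h1mem : (1 : G) ∈ ({commIter g x i}ᶜ : Set G) := by simp [Ne.symm hne]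
  obtain ⟨W, hWclopen, h1W, hWsub⟩ := compact_exists_isClopen_in_isOpen hopen h1mem
  obtain ⟨H, hH⟩ :=
    IsTopologicalGroup.exist_openNormalSubgroup_sub_clopen_nhds_of_one hWclopen h1W
  exact hWsub (hH (hmemN H.toSubgroup H.isNormal' H.isOpen')) rfl

theorem pronilpotent_finite_right_sink_trivial
    (G : Type) [Group G] [TopologicalSpace G] [IsTopologicalGroup G]
    [CompactSpace G] [T2Space G] [TotallyDisconnectedSpace G]
    (hpn : IsPronilpotent G)
    (g : G) (h : ∃ R : Set G, R.Finite ∧ IsRightEngelSink g R) :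
    IsRightEngelSink g ({1} : Set G) ∧
      ∀ x : G, ∃ n : ℕ, 0 < n ∧ commIter g x n = 1 := by
  obtain ⟨R, hRfin, hR⟩ := h
  have key : ∀ x : G, ∃ n₀ : ℕ, 0 < n₀ ∧ ∀ n, n₀ ≤ n → commIter g x n = 1 := by
    intro x
    obtain ⟨n₀, hn₀pos, hmem⟩ := hR x
    haveI : Finite R := hRfin.to_subtype
    obtain ⟨m, k, hmk, heq⟩ := Finite.exists_ne_map_eq_of_infinite
      (fun n : ℕ => (⟨commIter g x (n₀ + n), hmem _ (Nat.le_add_right _ _)⟩ : R))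
    have heq' : commIter g x (n₀ + m) = commIter g x (n₀ + k) := congrArg Subtype.val heq
    obtain ⟨i, j, hij, hijeq⟩ : ∃ i j : ℕ, i < j ∧ commIter g x i = commIter g x j := by
      rcases hmk.lt_or_gt with hlt | hlt
      · exact ⟨n₀ + m, n₀ + k, by omega, heq'⟩
      · exact ⟨n₀ + k, n₀ + m, by omega, heq'.symm⟩
    have hai : commIter g x i = 1 := commIter_periodic_eq_one G hpn g x i j hij hijeq
    refine ⟨max i 1, by omega, fun n hn => ?_⟩
    have hni : n = i + (n - i) := by omega
    calc commIter g x n = commIter g x (i + (n - i)) := by rw [← hni]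
      _ = commIter (commIter g x i) x (n - i) := commIter_add g x i _
      _ = 1 := by rw [hai, commIter_one]
  refine ⟨fun x => ?_, fun x => ?_⟩
  · obtain ⟨n₀, hpos, hall⟩ := key x
    exact ⟨n₀, hpos, fun n hn => hall n hn⟩
  · obtain ⟨n₀, hpos, hall⟩ := key x
    exact ⟨n₀, hpos, hall n₀ le_rfl⟩
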